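/- Let f be analytic on the open unit disk 𝔻 with f(0)=0 and f'(0)=1, and let λ ≥ 0 be real. If |f'(z) - 1|^{1-λ} · |1 + z·f''(z)/f'(z)|^{λ} < (3/2)^{λ} for all z ∈ 𝔻 (with f'(z) ≠ 0), then |f'(z) - 1| < 1 for all z ∈ 𝔻. -/

import Mathlib

open Complex Metric Set Filter Topology

lemma left_deriv_nonneg {χ : ℝ → ℝ} {d : ℝ} (h : HasDerivAt χ d 1)
    (hle : ∀ t ∈ Set.Ico (0:ℝ) 1, χ t ≤ χ 1) : 0 ≤ d := by
  have hslope : Tendsto (slope χ 1) (𝓝[≠] (1:ℝ)) (𝓝 d) := hasDerivAt_iff_tendsto_slope.1 h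
  have h2 : Tendsto (slope χ 1) (𝓝[<] (1:ℝ)) (𝓝 d) :=
    hslope.mono_left (nhdsWithin_mono _ fun x hx => ne_of_lt hx)
  refine ge_of_tendsto h2 ?_
  filter_upwards [Ioo_mem_nhdsLT_of_mem (⟨by norm_num, le_rfl⟩ : (1:ℝ) ∈ Set.Ioc 0 1)] with t ht
  have h1 : χ t ≤ χ 1 := hle t ⟨ht.1.le, ht.2⟩
  have h3 : t - 1 < 0 := by linarith [ht.2]
  rw [slope_def_field]
  exact div_nonneg_of_nonpos (by linarith) h3.le

lemma hasDerivAt_normSq_comp {v : ℝ → ℂ} {v' : ℂ} {t : ℝ} (hv : HasDerivAt v v' t) :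
    HasDerivAt (fun s => Complex.normSq (v s)) (2 * (v' * (starRingEnd ℂ) (v t)).re) t := by
  have h1 : HasDerivAt (fun s => v s * (starRingEnd ℂ) (v s))
      (v' * (starRingEnd ℂ) (v t) + v t * (starRingEnd ℂ) v') t := hv.mul hv.star
  have h2 := Complex.reCLM.hasFDerivAt.comp_hasDerivAt t h1
  have hval : Complex.reCLM (v' * (starRingEnd ℂ) (v t) + v t * (starRingEnd ℂ) v')
      = 2 * (v' * (starRingEnd ℂ) (v t)).re := by
    simp [Complex.add_re, Complex.mul_re]
    ring
  rw [hval] at h2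
  refine h2.congr_of_eventuallyEq (Filter.Eventually.of_forall fun s => ?_)
  show Complex.normSq (v s) = Complex.reCLM (v s * (starRingEnd ℂ) (v s))
  simp [Complex.mul_conj]

lemma jack_aux {w : ℂ → ℂ} {z0 : ℂ}
    (hw : DifferentiableOn ℂ w (ball (0:ℂ) 1))
    (h0 : z0 ≠ 0) (h1 : ‖z0‖ < 1) (hw0 : w 0 = 0)
    (hmax : ∀ z ∈ closedBall (0:ℂ) ‖z0‖, ‖w z‖ ≤ 1)
    (hlt : ∀ z ∈ ball (0:ℂ) ‖z0‖, ‖w z‖ < 1)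
    (hW : ‖w z0‖ = 1) :
    ∃ c : ℝ, 1 ≤ c ∧ z0 * deriv w z0 = (c : ℂ) * w z0 := by
  set r : ℝ := ‖z0‖ with hr
  have hr0 : 0 < r := norm_pos_iff.2 h0
  have hz0ball : z0 ∈ ball (0:ℂ) 1 := by simpa [mem_ball, dist_zero_right] using h1
  have hwz0 : HasDerivAt w (deriv w z0) z0 :=
    (hw.differentiableAt (isOpen_ball.mem_nhds hz0ball)).hasDerivAt
  set D : ℂ := deriv w z0 with hD
  set W : ℂ := w z0 with hWdef
  have hnsW : Complex.normSq W = 1 := by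
    rw [Complex.normSq_eq_norm_sq, hW]; norm_num
  -- the angular direction: Im (z0 * D * conj W) = 0
  set γ : ℝ → ℂ := fun θ => (r:ℂ) * Complex.exp (θ * Complex.I) with hγ
  have hγnorm : ∀ θ, ‖γ θ‖ = r := by
    intro θ
    simp [hγ, Complex.norm_exp_ofReal_mul_I, abs_of_pos hr0]
  have hγderiv : ∀ θ : ℝ, HasDerivAt γ (γ θ * Complex.I) θ := by
    intro θ
    have h1 : HasDerivAt (fun θ : ℝ => (θ:ℂ)) 1 θ := by
      simpa using (hasDerivAt_id θ).ofReal_comp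
    have h2 : HasDerivAt (fun θ : ℝ => (θ:ℂ) * Complex.I) Complex.I θ := by
      simpa using h1.mul_const Complex.I
    have h3 := h2.cexp
    have h4 := h3.const_mul (r:ℂ)
    convert h4 using 1
    · rfl
    · show (r:ℂ) * Complex.exp (θ * Complex.I) * Complex.I = _; ring
  set θ0 : ℝ := z0.arg with hθ0
  have hγθ0 : γ θ0 = z0 := by
    rw [hγ, hθ0, hr]
    exact_mod_cast Complex.norm_mul_exp_arg_mul_I z0
  have hvθ0 : HasDerivAt (fun θ => w (γ θ)) ((z0 * Complex.I) • D) θ0 := by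
    have := HasDerivAt.scomp (𝕜 := ℝ) (𝕜' := ℂ) θ0 (by rw [hγθ0]; exact hwz0) (hγderiv θ0)
    simpa [hγθ0, Function.comp_def] using this
  have hψderiv : HasDerivAt (fun θ => Complex.normSq (w (γ θ)))
      (2 * (((z0 * Complex.I) * D) * (starRingEnd ℂ) W).re) θ0 := by
    have := hasDerivAt_normSq_comp hvθ0
    simpa [hγθ0, smul_eq_mul] using this
  have hψmax : IsLocalMax (fun θ => Complex.normSq (w (γ θ))) θ0 := by
    apply Filter.Eventually.of_forall
    intro θ
    have h5 : ‖w (γ θ)‖ ≤ 1 := hmax _ (by simp [mem_closedBall, dist_zero_right, hγnorm θ])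
    have h6 : Complex.normSq (w (γ θ)) ≤ 1 := by
      rw [Complex.normSq_eq_norm_sq]
      nlinarith [norm_nonneg (w (γ θ))]
    simpa [hγθ0, ← hWdef, hnsW] using h6
  have hIm : (z0 * D * (starRingEnd ℂ) W).im = 0 := by
    have h7 := hψmax.hasDerivAt_eq_zero hψderiv
    have h8 : (((z0 * Complex.I) * D) * (starRingEnd ℂ) W).re = 0 := by linarith
    have h9 : ((z0 * Complex.I) * D) * (starRingEnd ℂ) W
        = Complex.I * (z0 * D * (starRingEnd ℂ) W) := by ring
    rw [h9] at h8
    simp only [Complex.mul_re, Complex.mul_im, Complex.I_re, Complex.I_im] at h8 ⊢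
    linarith
  -- the radial direction: 1 ≤ Re (z0 * D * conj W)
  have hschwarz : ∀ z ∈ ball (0:ℂ) r, ‖w z‖ ≤ 1 / r * ‖z‖ := by
    intro z hz
    have hd : DifferentiableOn ℂ w (ball (0:ℂ) r) := hw.mono (ball_subset_ball h1.le)
    have hm : MapsTo w (ball (0:ℂ) r) (ball (w 0) 1) := by
      intro x hx
      simp only [hw0, mem_ball, dist_zero_right]
      exact hlt x hx
    have := dist_le_div_mul_dist_of_mapsTo_ball hd (hm.mono_right ball_subset_closedBall) hz
    simpa [hw0, dist_zero_right] using this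
  have hv2 : HasDerivAt (fun t : ℝ => w ((t:ℂ) * z0)) (z0 • D) 1 := by
    have hh : HasDerivAt (fun t : ℝ => (t:ℂ) * z0) z0 1 := by
      simpa using (Complex.ofRealCLM.hasDerivAt (x := (1:ℝ))).mul_const z0
    have := HasDerivAt.scomp (𝕜 := ℝ) (𝕜' := ℂ) 1 (by norm_num; exact hwz0) hh
    simpa [Function.comp_def] using this
  have hψ2 : HasDerivAt (fun t : ℝ => Complex.normSq (w ((t:ℂ) * z0)))
      (2 * ((z0 * D) * (starRingEnd ℂ) W).re) 1 := by
    have := hasDerivAt_normSq_comp hv2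
    simpa [smul_eq_mul] using this
  have hχ : HasDerivAt (fun t : ℝ => Complex.normSq (w ((t:ℂ) * z0)) - t^2)
      (2 * ((z0 * D) * (starRingEnd ℂ) W).re - 2) 1 := by
    have hp : HasDerivAt (fun t : ℝ => t^2) 2 1 := by
      simpa using hasDerivAt_pow 2 (1:ℝ)
    exact hψ2.sub hp
  have hRe : 1 ≤ (z0 * D * (starRingEnd ℂ) W).re := by
    have hle : ∀ t ∈ Set.Ico (0:ℝ) 1,
        Complex.normSq (w ((t:ℂ) * z0)) - t^2 ≤ Complex.normSq (w ((1:ℂ) * z0)) - 1^2 := by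
      intro t ht
      have hnorm : ‖(t:ℂ) * z0‖ = t * r := by
        rw [norm_mul, Complex.norm_real, Real.norm_eq_abs, _root_.abs_of_nonneg ht.1]
      have hball : (t:ℂ) * z0 ∈ ball (0:ℂ) r := by
        simp only [mem_ball, dist_zero_right, hnorm]
        nlinarith [ht.2, hr0]
      have := hschwarz _ hball
      rw [hnorm] at this
      have h10 : ‖w ((t:ℂ) * z0)‖ ≤ t := by
        calc ‖w ((t:ℂ) * z0)‖ ≤ 1/r * (t*r) := this
        _ = t := by field_simp
      have h11 : Complex.normSq (w ((t:ℂ) * z0)) ≤ t^2 := by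
        rw [Complex.normSq_eq_norm_sq]
        nlinarith [norm_nonneg (w ((t:ℂ) * z0))]
      have h12 : Complex.normSq (w ((1:ℂ) * z0)) = 1 := by simpa using hnsW
      simp only [h12]
      nlinarith
    have := left_deriv_nonneg hχ (by simpa using hle)
    linarith
  refine ⟨(z0 * D * (starRingEnd ℂ) W).re, hRe, ?_⟩
  have hcc : ((z0 * D * (starRingEnd ℂ) W).re : ℂ) = z0 * D * (starRingEnd ℂ) W := by
    apply Complex.ext <;> simp [hIm]
  rw [hcc]
  have hWW : (starRingEnd ℂ) W * W = 1 := by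
    rw [mul_comm, Complex.mul_conj, hnsW]; norm_num
  calc z0 * D = z0 * D * ((starRingEnd ℂ) W * W) := by rw [hWW]; ring
  _ = z0 * D * (starRingEnd ℂ) W * W := by ring

lemma re_div_one_add {W : ℂ} (h1 : Complex.normSq W = 1) (h2 : (1:ℂ) + W ≠ 0) :
    (W / (1 + W)).re = 1/2 := by
  have hre : W.re ≠ -1 := by
    intro h
    apply h2
    have him : W.im = 0 := by
      have := h1
      rw [Complex.normSq_apply, h] at this
      nlinarith
    apply Complex.ext <;> simp [h, him]
  have hns : Complex.normSq (1 + W) = 2 + 2 * W.re := by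
    rw [Complex.normSq_apply] at h1 ⊢
    simp only [Complex.add_re, Complex.add_im, Complex.one_re, Complex.one_im]
    nlinarith
  have hden : (2:ℝ) + 2 * W.re ≠ 0 := fun h => hre (by linarith)
  rw [Complex.div_re, hns]
  rw [Complex.normSq_apply] at h1
  simp only [Complex.add_re, Complex.add_im, Complex.one_re, Complex.one_im]
  field_simp
  rw [div_eq_one_iff_eq (by contrapose! hre; linarith)]
  nlinarith

theorem singh_singh_criterion (f : ℂ → ℂ)
    (hf : DifferentiableOn ℂ f (ball (0:ℂ) 1))
    (hf0 : f 0 = 0) (hf'0 : deriv f 0 = 1)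
    (lam : ℝ) (hlam : 0 ≤ lam)
    (hne : ∀ z ∈ ball (0:ℂ) 1, deriv f z ≠ 0)
    (hineq : ∀ z ∈ ball (0:ℂ) 1,
      ‖deriv f z - 1‖ ^ (1 - lam) * ‖1 + z * deriv (deriv f) z / deriv f z‖ ^ lam
        < (3/2 : ℝ) ^ lam) :
    ∀ z ∈ ball (0:ℂ) 1, ‖deriv f z - 1‖ < 1 := by
  rcases eq_or_lt_of_le hlam with hlam0 | hlampos
  · intro z hz
    have := hineq z hz
    simpa [← hlam0] using this
  by_contra hcon
  push_neg at hcon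
  obtain ⟨z1, hz1, hge⟩ := hcon
  set w : ℂ → ℂ := fun z => deriv f z - 1 with hwdef
  have hfa : AnalyticOnNhd ℂ (deriv f) (ball (0:ℂ) 1) :=
    (hf.analyticOnNhd isOpen_ball).deriv
  have hwdiffAt : ∀ x ∈ ball (0:ℂ) 1, DifferentiableAt ℂ w x := fun x hx =>
    ((hfa x hx).differentiableAt).sub_const 1
  have hwdiff : DifferentiableOn ℂ w (ball (0:ℂ) 1) := fun x hx =>
    (hwdiffAt x hx).differentiableWithinAt
  have hwcont : ∀ x ∈ ball (0:ℂ) 1, ContinuousAt w x := fun x hx =>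
    (hwdiffAt x hx).continuousAt
  set s : ℝ := ‖z1‖ with hs
  have hs1 : s < 1 := by simpa [mem_ball, dist_zero_right] using hz1
  set K : Set ℂ := {z | z ∈ closedBall (0:ℂ) s ∧ 1 ≤ ‖w z‖} with hK
  have hKsub : K ⊆ ball (0:ℂ) 1 := fun z hz => closedBall_subset_ball hs1 hz.1
  have hKne : K.Nonempty := ⟨z1, by rw [mem_closedBall, dist_zero_right], hge⟩
  have hKclosed : IsClosed K := by
    refine isClosed_of_closure_subset fun x hx => ?_
    have hxcb : x ∈ closedBall (0:ℂ) s :=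
      closure_minimal (fun z hz => hz.1) Metric.isClosed_closedBall hx
    have hxball : x ∈ ball (0:ℂ) 1 := closedBall_subset_ball hs1 hxcb
    have hnb : (𝓝[K] x).NeBot := mem_closure_iff_nhdsWithin_neBot.1 hx
    have htd : Tendsto (fun z => ‖w z‖) (𝓝[K] x) (𝓝 ‖w x‖) :=
      ((hwcont x hxball).norm.tendsto).mono_left nhdsWithin_le_nhds
    refine ⟨hxcb, ge_of_tendsto htd ?_⟩
    filter_upwards [self_mem_nhdsWithin] with z hz using hz.2
  have hKcompact : IsCompact K :=
    (isCompact_closedBall (0:ℂ) s).of_isClosed_subset hKclosed fun z hz => hz.1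
  obtain ⟨z0, hz0K, hz0min⟩ :=
    hKcompact.exists_isMinOn hKne (continuous_norm.continuousOn)
  set r : ℝ := ‖z0‖ with hr
  have hz0ball : z0 ∈ ball (0:ℂ) 1 := hKsub hz0K
  have hr1 : r < 1 := by simpa [mem_ball, dist_zero_right] using hz0ball
  have hw0 : w 0 = 0 := by simp [hwdef, hf'0]
  have hz0ne : z0 ≠ 0 := by
    rintro rfl
    have := hz0K.2
    rw [hw0] at this
    norm_num at this
  have hr0 : 0 < r := norm_pos_iff.2 hz0ne
  have hrs : r ≤ s := by simpa [mem_closedBall, dist_zero_right] using hz0K.1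
  have hlt : ∀ z ∈ ball (0:ℂ) r, ‖w z‖ < 1 := by
    intro z hz
    rw [mem_ball, dist_zero_right] at hz
    by_contra hzge
    push_neg at hzge
    have hzK : z ∈ K := ⟨by
      rw [mem_closedBall, dist_zero_right]; linarith, hzge⟩
    have h2 : r ≤ ‖z‖ := hz0min hzK
    linarith
  have hmax : ∀ z ∈ closedBall (0:ℂ) r, ‖w z‖ ≤ 1 := by
    intro z hz
    rw [mem_closedBall, dist_zero_right] at hz
    rcases lt_or_eq_of_le hz with hzlt | hzeq
    · exact (hlt z (by rwa [mem_ball, dist_zero_right])).le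
    · have hzb : z ∈ ball (0:ℂ) 1 := by
        rw [mem_ball, dist_zero_right, hzeq]; exact hr1
      have htd : Tendsto (fun t : ℝ => ‖w ((t:ℂ) * z)‖) (𝓝[<] (1:ℝ)) (𝓝 ‖w z‖) := by
        have hc : ContinuousAt (fun t : ℝ => ‖w ((t:ℂ) * z)‖) 1 := by
          have h1 : ContinuousAt (fun t : ℝ => (t:ℂ) * z) 1 :=
            (Complex.continuous_ofReal.mul continuous_const).continuousAt
          have h2 : ContinuousAt w ((fun t : ℝ => (t:ℂ) * z) 1) := by
            show ContinuousAt w (((1:ℝ):ℂ) * z)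
            rw [Complex.ofReal_one, one_mul]; exact hwcont z hzb
          have h3 : ContinuousAt (fun t : ℝ => w ((t:ℂ) * z)) 1 :=
            ContinuousAt.comp (g := w) (f := fun t : ℝ => (t:ℂ) * z) h2 h1
          exact h3.norm
        simpa using hc.tendsto.mono_left nhdsWithin_le_nhds
      refine le_of_tendsto htd ?_
      filter_upwards [Ioo_mem_nhdsLT_of_mem
        (⟨by norm_num, le_rfl⟩ : (1:ℝ) ∈ Set.Ioc 0 1)] with t ht
      have hnorm : ‖(t:ℂ) * z‖ = t * r := by
        rw [norm_mul, Complex.norm_real, Real.norm_eq_abs, _root_.abs_of_nonneg ht.1.le, hzeq]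
      have hball : (t:ℂ) * z ∈ ball (0:ℂ) r := by
        rw [mem_ball, dist_zero_right, hnorm]
        nlinarith [ht.2, hr0]
      exact (hlt _ hball).le
  have hW1 : ‖w z0‖ = 1 :=
    le_antisymm (hmax z0 (by rw [mem_closedBall, dist_zero_right])) hz0K.2
  obtain ⟨c, hc1, hceq⟩ := jack_aux hwdiff hz0ne hr1 hw0 hmax hlt hW1
  -- final contradiction
  set W : ℂ := w z0 with hWdef2
  have hnsW : Complex.normSq W = 1 := by
    rw [Complex.normSq_eq_norm_sq, hW1]; norm_num
  have hder2 : deriv w z0 = deriv (deriv f) z0 := by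
    simp [hwdef, deriv_sub_const]
  have hfz0 : deriv f z0 = 1 + W := by
    rw [hWdef2]
    show deriv f z0 = 1 + (deriv f z0 - 1)
    ring
  have hne0 : (1:ℂ) + W ≠ 0 := by
    rw [← hfz0]; exact hne z0 hz0ball
  have hQ : (1 + z0 * deriv (deriv f) z0 / deriv f z0) = 1 + (c:ℂ) * (W / (1+W)) := by
    rw [← hder2, hfz0, hceq, mul_div_assoc]
  have hhalf : (W / (1+W)).re = 1/2 := re_div_one_add hnsW hne0
  have hQre : (1 + (c:ℂ) * (W/(1+W))).re = 1 + c * (1/2) := by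
    simp [Complex.add_re, Complex.mul_re, Complex.ofReal_re, Complex.ofReal_im, hhalf]
  have h32 : (3/2 : ℝ) ≤ ‖1 + z0 * deriv (deriv f) z0 / deriv f z0‖ := by
    rw [hQ]
    calc (3/2 : ℝ) ≤ 1 + c * (1/2) := by linarith
    _ = (1 + (c:ℂ) * (W/(1+W))).re := hQre.symm
    _ ≤ ‖1 + (c:ℂ) * (W/(1+W))‖ := by
        exact Complex.re_le_norm _
  have hfinal := hineq z0 hz0ball
  have hwz0eq : ‖deriv f z0 - 1‖ = 1 := hW1
  rw [hwz0eq, Real.one_rpow, one_mul] at hfinal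
  have hmono : (3/2:ℝ) ^ lam ≤ ‖1 + z0 * deriv (deriv f) z0 / deriv f z0‖ ^ lam :=
    Real.rpow_le_rpow (by norm_num) h32 hlam
  linarith
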